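/- If I is a Poisson ideal of a commutative Noetherian Poisson algebra Z over a field of characteristic zero, then every minimal prime ideal of Z over I is also a Poisson ideal. -/
import Mathlib

section Aux

/-- Cancel a nonzero natural-number factor inside an ideal of a `k`-algebra, `char k = 0`. -/
lemma aux_nat_cancel {k : Type*} [Field k] [CharZero k] {Z : Type*} [CommRing Z] [Algebra k Z] (I : Ideal Z) (m : ℕ) (hm : m ≠ 0) (w : Z)
    (h : (m : Z) * w ∈ I) : w ∈ I := by
  have h2 : algebraMap k Z ((m : k)⁻¹) * ((m : Z) * w) ∈ I := Ideal.mul_mem_left _ _ h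
  have hc : (m : Z) = algebraMap k Z (m : k) := by simp
  rw [hc, ← mul_assoc, ← map_mul, inv_mul_cancel₀ (by exact_mod_cast hm), map_one,
    one_mul] at h2
  exact h2

/-- Derivation-like maps on powers. -/
lemma aux_dpow {Z : Type*} [CommRing Z] (D : Z → Z) (hleib : ∀ b c : Z, D (b * c) = D b * c + b * D c) (b : Z) :
    ∀ m : ℕ, D (b ^ (m + 1)) = ((m + 1 : ℕ) : Z) * (b ^ m * D b) := by
  intro m
  induction m with
  | zero => simp [pow_one]
  | succ m ih =>
      have : b ^ (m + 2) = b * b ^ (m + 1) := by ring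
      rw [this, hleib, ih]
      push_cast
      ring

/-- The Seidenberg descent step. -/
lemma aux_step {k : Type*} [Field k] [CharZero k] {Z : Type*} [CommRing Z] [Algebra k Z] (I : Ideal Z) (D : Z → Z)
    (hleib : ∀ b c : Z, D (b * c) = D b * c + b * D c)
    (hD : ∀ x ∈ I, D x ∈ I) (a : Z) (j kk : ℕ)
    (h : a ^ (j + 1) * (D a) ^ (2 * kk + 1) ∈ I) :
    a ^ j * (D a) ^ (2 * kk + 3) ∈ I := by
  have t := hD _ h
  rw [hleib, aux_dpow D hleib a j, aux_dpow D hleib (D a) (2 * kk)] at t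
  have u := I.mul_mem_right (D a) t
  have hmem2 : ((2 * kk + 1 : ℕ) : Z) * ((a ^ (j + 1) * (D a) ^ (2 * kk + 1)) * D (D a)) ∈ I :=
    Ideal.mul_mem_left _ _ (I.mul_mem_right _ h)
  have key : ((j + 1 : ℕ) : Z) * (a ^ j * (D a) ^ (2 * kk + 3)) =
      (((j + 1 : ℕ) : Z) * (a ^ j * D a) * (D a) ^ (2 * kk + 1) +
        a ^ (j + 1) * (((2 * kk + 1 : ℕ) : Z) * ((D a) ^ (2 * kk) * D (D a)))) * D a -
      ((2 * kk + 1 : ℕ) : Z) * ((a ^ (j + 1) * (D a) ^ (2 * kk + 1)) * D (D a)) := by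
    push_cast
    ring
  have hfin : ((j + 1 : ℕ) : Z) * (a ^ j * (D a) ^ (2 * kk + 3)) ∈ I := by
    rw [key]; exact I.sub_mem u hmem2
  exact aux_nat_cancel (k := k) I (j + 1) (Nat.succ_ne_zero j) _ hfin

/-- In characteristic zero, the radical of a differential ideal is differential. -/
lemma aux_rad {k : Type*} [Field k] [CharZero k] {Z : Type*} [CommRing Z] [Algebra k Z] (I : Ideal Z) (D : Z → Z)
    (hleib : ∀ b c : Z, D (b * c) = D b * c + b * D c)
    (hD : ∀ x ∈ I, D x ∈ I) (a : Z) (ha : a ∈ I.radical) : D a ∈ I.radical := by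
  obtain ⟨n, hn⟩ := ha
  cases n with
  | zero =>
      have : I = ⊤ := Ideal.eq_top_iff_one I |>.mpr (by simpa using hn)
      subst this
      exact ⟨1, Submodule.mem_top⟩
  | succ m =>
      -- base case: a^m * D a ∈ I
      have t := hD _ hn
      rw [aux_dpow D hleib a m] at t
      have base : a ^ m * (D a) ^ (2 * 0 + 1) ∈ I := by
        simpa using aux_nat_cancel (k := k) I (m + 1) (Nat.succ_ne_zero m) _ t
      -- descent
      have desc : ∀ j : ℕ, ∀ kk : ℕ, a ^ j * (D a) ^ (2 * kk + 1) ∈ I →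
          D a ∈ I.radical := by
        intro j
        induction j with
        | zero =>
            intro kk h
            rw [pow_zero, one_mul] at h
            exact ⟨2 * kk + 1, h⟩
        | succ j ih =>
            intro kk h
            have h2 := aux_step (k := k) I D hleib hD a j kk h
            have e : 2 * kk + 3 = 2 * (kk + 1) + 1 := by ring
            rw [e] at h2
            exact ih (kk + 1) h2
      exact desc m 0 base

end Aux

/-- If `I` is a Poisson ideal of a commutative Noetherian Poisson algebra `Z` over a field
of characteristic zero, then every minimal prime of `Z` over `I` is also a Poisson ideal. -/
theorem minimal_primes_over_poisson_ideal_are_poisson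
    (k : Type*) [Field k] [CharZero k]
    (Z : Type*) [CommRing Z] [Algebra k Z] [IsNoetherianRing Z]
    (bracket : Z → Z → Z)
    (hadd_l : ∀ a b c : Z, bracket (a + b) c = bracket a c + bracket b c)
    (hadd_r : ∀ a b c : Z, bracket a (b + c) = bracket a b + bracket a c)
    (hsmul_l : ∀ (r : k) (a b : Z), bracket (r • a) b = r • bracket a b)
    (hsmul_r : ∀ (r : k) (a b : Z), bracket a (r • b) = r • bracket a b)
    (hleib_r : ∀ a b c : Z, bracket a (b * c) = bracket a b * c + b * bracket a c)
    (hanti : ∀ a b : Z, bracket a b = - bracket b a)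
    (hjac : ∀ a b c : Z,
      bracket a (bracket b c) + bracket b (bracket c a) + bracket c (bracket a b) = 0)
    (I : Ideal Z) (hI : ∀ z : Z, ∀ a ∈ I, bracket z a ∈ I) :
    ∀ P ∈ I.minimalPrimes, ∀ z : Z, ∀ a ∈ P, bracket z a ∈ P := by
  intro P hP z a ha
  have hPprime : P.IsPrime := hP.1.1
  have hIP : I ≤ P := hP.1.2
  have hradP : I.radical ≤ P := hPprime.radical_le_iff.mpr hIP
  have hD : ∀ x ∈ I, bracket z x ∈ I := fun x hx => hI z x hx
  have hleib : ∀ b c : Z, bracket z (b * c) = bracket z b * c + b * bracket z c :=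
    fun b c => hleib_r z b c
  -- finiteness of minimal primes
  have hfin : I.minimalPrimes.Finite := by
    rw [Ideal.minimalPrimes_eq_comap]
    exact (minimalPrimes.finite_of_isNoetherianRing (Z ⧸ I)).image _
  classical
  set T := hfin.toFinset.erase P with hT
  -- find s in all other minimal primes, not in P
  have hnle : ¬ T.inf id ≤ P := by
    intro hle
    obtain ⟨Q, hQT, hQP⟩ := hPprime.inf_le'.mp hle
    have hQmem : Q ∈ I.minimalPrimes := hfin.mem_toFinset.mp (Finset.mem_of_mem_erase hQT)
    have hQne : Q ≠ P := Finset.ne_of_mem_erase hQT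
    exact hQne (le_antisymm hQP (hP.2 ⟨hQmem.1.1, hQmem.1.2⟩ hQP))
  obtain ⟨s, hsT, hsP⟩ := SetLike.not_le_iff_exists.mp hnle
  have hsa : s * a ∈ I.radical := by
    rw [← Ideal.sInf_minimalPrimes]
    refine Ideal.mem_sInf.mpr fun {Q} hQ => ?_
    by_cases hQP : Q = P
    · subst hQP; exact Q.mul_mem_left s ha
    · have hQT : Q ∈ T := Finset.mem_erase.mpr ⟨hQP, hfin.mem_toFinset.mpr hQ⟩
      exact Q.mul_mem_right a ((Finset.inf_le hQT : T.inf id ≤ Q) hsT)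
  have h2 : bracket z (s * a) ∈ I.radical :=
    aux_rad (k := k) I (bracket z) hleib hD _ hsa
  have h3 : bracket z s * a + s * bracket z a ∈ P := by
    rw [← hleib]; exact hradP h2
  have h4 : s * bracket z a ∈ P := by
    have := P.sub_mem h3 (P.mul_mem_left (bracket z s) ha)
    simpa using this
  exact (hPprime.mem_or_mem h4).resolve_left hsP
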